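/- Let G_{K₂} be the graph on vertices {v₁, v₂, v₃, v₄, u, w} with edges v₁u, uv₂, uw, v₂v₄, v₁v₃, v₃w, wv₄. Let G be a finite simple graph with at least one vertex, and let H_G be the disjoint union of G_{K₂} and G with all edges v_i x added for x ∈ V(G), i = 1, 2, 3, 4. Then for every field F: wcdim(H_G, F) = wcdim(G, F) + 2 if char(F) = 2, and wcdim(H_G, F) = wcdim(G, F) + 1 if char(F) ≠ 2. -/

import Mathlib

/-- `M` is an independent set of `G` (as a finset): pairwise non-adjacent vertices. -/
def IsIndepF {V : Type*} (G : SimpleGraph V) (M : Finset V) : Prop :=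
  ∀ v ∈ M, ∀ w ∈ M, ¬ G.Adj v w

/-- `M` is a maximal independent set of `G`: independent and not properly contained
in any other independent set. -/
def IsMaxIndepF {V : Type*} (G : SimpleGraph V) (M : Finset V) : Prop :=
  IsIndepF G M ∧ ∀ M' : Finset V, IsIndepF G M' → M ⊆ M' → M' = M

/-- The well-covered space of `G` over `F`: all weightings `w : V → F` whose sum over
every maximal independent set of `G` is the same constant. -/
def wcSpace (F : Type*) [Field F] {V : Type*} (G : SimpleGraph V) : Submodule F (V → F) where
  carrier := {w | ∀ M N : Finset V, IsMaxIndepF G M → IsMaxIndepF G N →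
    ∑ v ∈ M, w v = ∑ v ∈ N, w v}
  add_mem' := by
    intro a b ha hb M N hM hN
    simp only [Pi.add_apply, Finset.sum_add_distrib, ha M N hM hN, hb M N hM hN]
  zero_mem' := by intro M N _ _; simp
  smul_mem' := by
    intro c a ha M N hM hN
    simp only [Pi.smul_apply, smul_eq_mul, ← Finset.mul_sum, ha M N hM hN]

/-- The well-covered dimension of `G` over `F`. -/
noncomputable def wcdim (F : Type*) [Field F] {V : Type*} (G : SimpleGraph V) : ℕ :=
  Module.finrank F (wcSpace F G)

/-- Edge list of the graph `G_{K₂}`: vertices `v₁ v₂ v₃ v₄ u w = 0 1 2 3 4 5`, edges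
`v₁u, uv₂, uw, v₂v₄, v₁v₃, v₃w, wv₄`. -/
def GK2edges : List (Fin 6 × Fin 6) :=
  [(0, 4), (4, 1), (4, 5), (1, 3), (0, 2), (2, 5), (5, 3)]

/-- The graph `G_{K₂}`. -/
def GK2 : SimpleGraph (Fin 6) :=
  SimpleGraph.fromRel fun x y => (x, y) ∈ GK2edges

/-- `H_G`: the disjoint union of `G_{K₂}` and `G`, with every edge `vᵢ x`
(`x ∈ V(G)`, `i = 1, 2, 3, 4`) added. -/
def HG {V : Type*} (G : SimpleGraph V) : SimpleGraph (Fin 6 ⊕ V) :=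
  SimpleGraph.fromRel fun x y =>
    match x, y with
    | Sum.inl a, Sum.inl b => (a, b) ∈ GK2edges
    | Sum.inl a, Sum.inr _ => a = 0 ∨ a = 1 ∨ a = 2 ∨ a = 3
    | Sum.inr _, Sum.inl b => b = 0 ∨ b = 1 ∨ b = 2 ∨ b = 3
    | Sum.inr x, Sum.inr y => G.Adj x y

open Sum

instance : DecidableRel GK2.Adj := fun a b =>
  decidable_of_iff (a ≠ b ∧ ((a,b) ∈ GK2edges ∨ (b,a) ∈ GK2edges)) Iff.rfl
instance (M : Finset (Fin 6)) : Decidable (IsIndepF GK2 M) :=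
  decidable_of_iff (∀ v ∈ M, ∀ w ∈ M, ¬ GK2.Adj v w) Iff.rfl
instance (M : Finset (Fin 6)) : Decidable (IsMaxIndepF GK2 M) :=
  decidable_of_iff (IsIndepF GK2 M ∧ ∀ M' : Finset (Fin 6), IsIndepF GK2 M' → M ⊆ M' → M' = M) Iff.rfl

set_option maxRecDepth 10000 in
lemma gk2_classify : ∀ M : Finset (Fin 6), IsMaxIndepF GK2 M ↔
    (M = {0,1,5} ∨ M = {2,3,4} ∨ M = {0,3} ∨ M = {1,2}) := by decide

lemma HG_adj_ll {V : Type*} (G : SimpleGraph V) {a b : Fin 6} : (HG G).Adj (inl a) (inl b) ↔ GK2.Adj a b := by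
  simp [HG, GK2, SimpleGraph.fromRel_adj]

lemma HG_adj_lr {V : Type*} (G : SimpleGraph V) {a : Fin 6} {x : V} :
    (HG G).Adj (inl a) (inr x) ↔ (a = 0 ∨ a = 1 ∨ a = 2 ∨ a = 3) := by
  simp [HG, SimpleGraph.fromRel_adj]

lemma HG_adj_rr {V : Type*} {G : SimpleGraph V} {x y : V} : (HG G).Adj (inr x) (inr y) ↔ G.Adj x y := by
  simp only [HG, SimpleGraph.fromRel_adj]
  constructor
  · rintro ⟨h, h1 | h1⟩
    · exact h1
    · exact h1.symm
  · exact fun h => ⟨by simpa using h.ne, Or.inl h⟩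

open Sum Finset

lemma exists_maxIndep {V : Type*} [Fintype V] (G : SimpleGraph V) :
    ∃ M : Finset V, IsMaxIndepF G M := by
  classical
  obtain ⟨M, hM, hmax⟩ := Finset.exists_max_image
    ((Finset.univ.powerset.filter (fun T => IsIndepF G T))) Finset.card
    ⟨∅, by simp [IsIndepF]⟩
  simp only [Finset.mem_filter, Finset.mem_powerset] at hM
  refine ⟨M, hM.2, fun M' hM' hsub => ?_⟩
  have := hmax M' (by simp [Finset.mem_filter, hM'])
  exact (Finset.eq_of_subset_of_card_le hsub this).symm

lemma maxIndep_nonempty {V : Type*} [Nonempty V] (G : SimpleGraph V) {M : Finset V}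
    (hM : IsMaxIndepF G M) : M.Nonempty := by
  rcases M.eq_empty_or_nonempty with rfl | h
  · obtain ⟨v⟩ := ‹Nonempty V›
    have h1 : IsIndepF G {v} := by
      intro a ha b hb
      simp only [Finset.mem_singleton] at ha hb
      subst ha; subst hb; exact G.irrefl
    have := hM.2 {v} h1 (Finset.empty_subset _)
    simp at this
  · exact h


lemma L_maxIndep {V : Type*} [DecidableEq V] (G : SimpleGraph V) (S : Finset (Fin 6))
    (hS : IsMaxIndepF GK2 S) (hi : ∃ i ∈ S, i = 0 ∨ i = 1 ∨ i = 2 ∨ i = 3) :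
    IsMaxIndepF (HG G) (S.image inl) := by
  obtain ⟨i, hiS, hi4⟩ := hi
  constructor
  · intro a ha b hb
    simp only [Finset.mem_image] at ha hb
    obtain ⟨x, hx, rfl⟩ := ha
    obtain ⟨y, hy, rfl⟩ := hb
    rw [HG_adj_ll]
    exact hS.1 x hx y hy
  · intro M' hM' hsub
    apply Finset.Subset.antisymm _ hsub
    intro z hz
    match z with
    | inr x =>
      exact absurd (hM' (inl i) (hsub (Finset.mem_image_of_mem _ hiS)) (inr x) hz)
        (by rw [not_not, HG_adj_lr]; exact hi4)
    | inl j =>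
      have hins : IsIndepF GK2 (insert j S) := by
        intro a ha b hb
        rw [← HG_adj_ll G]
        simp only [Finset.mem_insert] at ha hb
        apply hM'
        · rcases ha with rfl | ha
          · exact hz
          · exact hsub (Finset.mem_image_of_mem _ ha)
        · rcases hb with rfl | hb
          · exact hz
          · exact hsub (Finset.mem_image_of_mem _ hb)
      have : insert j S = S := hS.2 _ hins (Finset.subset_insert _ _)
      exact Finset.mem_image_of_mem _ (this ▸ Finset.mem_insert_self j S)

lemma insert_maxIndep {V : Type*} [DecidableEq V] [Nonempty V] (G : SimpleGraph V) (j : Fin 6)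
    (hj : j = 4 ∨ j = 5) {N : Finset V} (hN : IsMaxIndepF G N) :
    IsMaxIndepF (HG G) (insert (inl j) (N.image inr)) := by
  have hjr : ∀ x : V, ¬ (HG G).Adj (inl j) (inr x) := by
    intro x
    rw [HG_adj_lr]
    rcases hj with rfl | rfl <;> decide
  constructor
  · intro a ha b hb
    simp only [Finset.mem_insert, Finset.mem_image] at ha hb
    rcases ha with rfl | ⟨x, hx, rfl⟩
    · rcases hb with rfl | ⟨y, hy, rfl⟩
      · exact (HG G).irrefl
      · exact hjr y
    · rcases hb with rfl | ⟨y, hy, rfl⟩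
      · exact fun h => hjr x h.symm
      · rw [HG_adj_rr]; exact hN.1 x hx y hy
  · intro M' hM' hsub
    obtain ⟨v0, hv0⟩ := maxIndep_nonempty G hN
    have hv0M : inr v0 ∈ M' := hsub (Finset.mem_insert_of_mem (Finset.mem_image_of_mem _ hv0))
    have hjM : inl j ∈ M' := hsub (Finset.mem_insert_self _ _)
    apply Finset.Subset.antisymm _ hsub
    intro z hz
    match z with
    | inl i =>
      have hcase : ∀ k : Fin 6, k = 0 ∨ k = 1 ∨ k = 2 ∨ k = 3 ∨ k = 4 ∨ k = 5 := by decide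
      rcases hcase i with h4 | h4 | h4 | h4 | rfl | rfl
      · exact absurd (hM' _ hz _ hv0M) (by rw [not_not, HG_adj_lr]; tauto)
      · exact absurd (hM' _ hz _ hv0M) (by rw [not_not, HG_adj_lr]; tauto)
      · exact absurd (hM' _ hz _ hv0M) (by rw [not_not, HG_adj_lr]; tauto)
      · exact absurd (hM' _ hz _ hv0M) (by rw [not_not, HG_adj_lr]; tauto)
      · rcases hj with rfl | rfl
        · exact Finset.mem_insert_self _ _
        · exact absurd (hM' _ hz _ hjM) (by rw [not_not, HG_adj_ll]; decide)
      · rcases hj with rfl | rfl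
        · exact absurd (hM' _ hz _ hjM) (by rw [not_not, HG_adj_ll]; decide)
        · exact Finset.mem_insert_self _ _
    | inr x =>
      have hins : IsIndepF G (insert x N) := by
        intro a ha b hb
        rw [← HG_adj_rr (G := G)]
        simp only [Finset.mem_insert] at ha hb
        apply hM'
        · rcases ha with rfl | ha
          · exact hz
          · exact hsub (Finset.mem_insert_of_mem (Finset.mem_image_of_mem _ ha))
        · rcases hb with rfl | hb
          · exact hz
          · exact hsub (Finset.mem_insert_of_mem (Finset.mem_image_of_mem _ hb))
      have : insert x N = N := hN.2 _ hins (Finset.subset_insert _ _)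
      exact Finset.mem_insert_of_mem
        (Finset.mem_image_of_mem _ (this ▸ Finset.mem_insert_self x N))


lemma HG_maxIndep_iff {V : Type*} [DecidableEq V] [Nonempty V] (G : SimpleGraph V)
    (M : Finset (Fin 6 ⊕ V)) : IsMaxIndepF (HG G) M ↔
    (M = ({0,1,5} : Finset (Fin 6)).image inl ∨ M = ({2,3,4} : Finset (Fin 6)).image inl ∨
     M = ({0,3} : Finset (Fin 6)).image inl ∨ M = ({1,2} : Finset (Fin 6)).image inl ∨
     ∃ N : Finset V, IsMaxIndepF G N ∧
       (M = insert (inl 4) (N.image inr) ∨ M = insert (inl 5) (N.image inr))) := by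
  constructor
  · intro hM
    classical
    set Ml : Finset (Fin 6) := M.preimage inl Sum.inl_injective.injOn with hMl
    set Mr : Finset V := M.preimage inr Sum.inr_injective.injOn with hMr
    have hmemL : ∀ i : Fin 6, i ∈ Ml ↔ inl i ∈ M := fun i => Finset.mem_preimage
    have hmemR : ∀ x : V, x ∈ Mr ↔ inr x ∈ M := fun x => Finset.mem_preimage
    have hMeq : M = Ml.image inl ∪ Mr.image inr := by
      ext z
      match z with
      | inl i => simp [hmemL]
      | inr x => simp [hmemR]
    by_cases hc : ∃ i ∈ Ml, i = 0 ∨ i = 1 ∨ i = 2 ∨ i = 3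
    · -- case with a vᵢ
      obtain ⟨i, hiMl, hi4⟩ := hc
      have hMre : Mr = ∅ := by
        rw [Finset.eq_empty_iff_forall_notMem]
        intro x hx
        exact hM.1 (inl i) ((hmemL i).1 hiMl) (inr x) ((hmemR x).1 hx)
          ((HG_adj_lr G).2 hi4)
      have hMeq' : M = Ml.image inl := by rw [hMeq, hMre]; simp
      have hMlmax : IsMaxIndepF GK2 Ml := by
        constructor
        · intro a ha b hb
          rw [← HG_adj_ll G]
          exact hM.1 _ ((hmemL a).1 ha) _ ((hmemL b).1 hb)
        · intro N hN hsub
          have hind : IsIndepF (HG G) (N.image inl) := by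
            intro a ha b hb
            simp only [Finset.mem_image] at ha hb
            obtain ⟨x, hx, rfl⟩ := ha
            obtain ⟨y, hy, rfl⟩ := hb
            rw [HG_adj_ll]
            exact hN x hx y hy
          have hsub2 : M ⊆ N.image inl := by
            rw [hMeq']; exact Finset.image_subset_image hsub
          have := hM.2 _ hind hsub2
          rw [hMeq'] at this
          exact Finset.image_injective Sum.inl_injective this
      rcases (gk2_classify Ml).1 hMlmax with h | h | h | h
      · exact Or.inl (by rw [hMeq', h])
      · exact Or.inr (Or.inl (by rw [hMeq', h]))
      · exact Or.inr (Or.inr (Or.inl (by rw [hMeq', h])))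
      · exact Or.inr (Or.inr (Or.inr (Or.inl (by rw [hMeq', h]))))
    · -- no vᵢ in M
      push_neg at hc
      have hMl45 : ∀ i ∈ Ml, i = 4 ∨ i = 5 := by
        intro i hi
        have h := hc i hi
        have h6 : ∀ k : Fin 6, k ≠ 0 → k ≠ 1 → k ≠ 2 → k ≠ 3 → k = 4 ∨ k = 5 := by decide
        exact h6 i h.1 h.2.1 h.2.2.1 h.2.2.2
      have hMrmax : IsMaxIndepF G Mr := by
        constructor
        · intro a ha b hb
          rw [← HG_adj_rr (G := G)]
          exact hM.1 _ ((hmemR a).1 ha) _ ((hmemR b).1 hb)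
        · intro N hN hsub
          have hind : IsIndepF (HG G) (M ∪ N.image inr) := by
            intro a ha b hb
            simp only [Finset.mem_union, Finset.mem_image] at ha hb
            have key : ∀ c ∈ M, ∀ y ∈ N, ¬ (HG G).Adj c (inr y) := by
              intro c hcM y hyN
              match c with
              | inl i =>
                rw [HG_adj_lr]
                have := hMl45 i ((hmemL i).2 hcM)
                rcases this with rfl | rfl <;> decide
              | inr x =>
                rw [HG_adj_rr]
                exact hN x (hsub ((hmemR x).2 hcM)) y hyN
            rcases ha with ha | ⟨x, hx, rfl⟩
            · rcases hb with hb | ⟨y, hy, rfl⟩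
              · exact hM.1 _ ha _ hb
              · exact key a ha y hy
            · rcases hb with hb | ⟨y, hy, rfl⟩
              · exact fun h => key b hb x hx h.symm
              · rw [HG_adj_rr]; exact hN x hx y hy
          have := hM.2 _ hind Finset.subset_union_left
          have hNsub : N ⊆ Mr := by
            intro y hy
            rw [hmemR, ← this]
            exact Finset.mem_union_right _ (Finset.mem_image_of_mem _ hy)
          exact Finset.Subset.antisymm hNsub hsub
      have hMlne : Ml.Nonempty := by
        rcases Ml.eq_empty_or_nonempty with he | h
        · exfalso
          have hind : IsIndepF (HG G) (insert (inl 4) M) := by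
            intro a ha b hb
            simp only [Finset.mem_insert] at ha hb
            have key : ∀ c ∈ M, ¬ (HG G).Adj (inl 4) c := by
              intro c hcM
              match c with
              | inl i =>
                exact absurd ((hmemL i).2 hcM) (by rw [he]; simp)
              | inr x => rw [HG_adj_lr]; decide
            rcases ha with rfl | ha
            · rcases hb with rfl | hb
              · exact (HG G).irrefl
              · exact key b hb
            · rcases hb with rfl | hb
              · exact fun h => key a ha h.symm
              · exact hM.1 a ha b hb
          have := hM.2 _ hind (Finset.subset_insert _ _)
          have h4 : (4 : Fin 6) ∈ Ml := by
            rw [hmemL, ← this]; exact Finset.mem_insert_self _ _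
          rw [he] at h4; simp at h4
        · exact h
      obtain ⟨j, hj⟩ := hMlne
      have hjj := hMl45 j hj
      have honly : Ml = {j} := by
        apply Finset.Subset.antisymm _ (by simpa using hj)
        intro k hk
        rw [Finset.mem_singleton]
        by_contra hne
        have hadj : GK2.Adj k j := by
          rcases hMl45 k hk with rfl | rfl <;> rcases hjj with rfl | rfl <;>
            first | (exact absurd rfl hne) | decide
        exact hM.1 _ ((hmemL k).1 hk) _ ((hmemL j).1 hj) ((HG_adj_ll G).2 hadj)
      refine Or.inr (Or.inr (Or.inr (Or.inr ⟨Mr, hMrmax, ?_⟩)))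
      have : M = insert (inl j) (Mr.image inr) := by
        rw [hMeq, honly]; simp [Finset.insert_eq, -Finset.singleton_union]
      rcases hjj with rfl | rfl
      · exact Or.inl this
      · exact Or.inr this
  · rintro (rfl | rfl | rfl | rfl | ⟨N, hN, rfl | rfl⟩)
    · exact L_maxIndep G _ ((gk2_classify _).2 (Or.inl rfl)) ⟨0, by decide, by decide⟩
    · exact L_maxIndep G _ ((gk2_classify _).2 (Or.inr (Or.inl rfl))) ⟨2, by decide, by decide⟩
    · exact L_maxIndep G _ ((gk2_classify _).2 (Or.inr (Or.inr (Or.inl rfl)))) ⟨0, by decide, by decide⟩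
    · exact L_maxIndep G _ ((gk2_classify _).2 (Or.inr (Or.inr (Or.inr rfl)))) ⟨1, by decide, by decide⟩
    · exact insert_maxIndep G 4 (Or.inl rfl) hN
    · exact insert_maxIndep G 5 (Or.inr rfl) hN


noncomputable def N0 {V : Type*} [Fintype V] (G : SimpleGraph V) : Finset V :=
  (exists_maxIndep G).choose

lemma N0_spec {V : Type*} [Fintype V] (G : SimpleGraph V) : IsMaxIndepF G (N0 G) :=
  (exists_maxIndep G).choose_spec

def K2sub (F : Type*) [Field F] : Submodule F F where
  carrier := {x | x + x = 0}
  add_mem' := by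
    intro a b ha hb
    simp only [Set.mem_setOf_eq] at *
    linear_combination ha + hb
  zero_mem' := by simp
  smul_mem' := by
    intro c x hx
    simp only [Set.mem_setOf_eq, smul_eq_mul] at *
    linear_combination c * hx

lemma sum_image_inl {F V : Type*} [Field F] [DecidableEq V] (S : Finset (Fin 6)) (g : Fin 6 ⊕ V → F) :
    ∑ z ∈ S.image inl, g z = ∑ i ∈ S, g (inl i) :=
  Finset.sum_image (by simp)

lemma sum_insert_inr {F V : Type*} [Field F] [DecidableEq V] (j : Fin 6) (N : Finset V)
    (g : Fin 6 ⊕ V → F) :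
    ∑ z ∈ insert (inl j) (N.image inr), g z = g (inl j) + ∑ x ∈ N, g (inr x) := by
  rw [Finset.sum_insert (by simp), Finset.sum_image (by simp)]


lemma mem_wcSpace_HG_iff {F V : Type*} [Field F] [Fintype V] [Nonempty V] [DecidableEq V]
    (G : SimpleGraph V) (w : Fin 6 ⊕ V → F) :
    w ∈ wcSpace F (HG G) ↔
      (w (inl 5) = w (inl 4) ∧ w (inl 4) + w (inl 4) = 0 ∧
       w (inl 1) = (∑ x ∈ N0 G, w (inr x)) - w (inl 0) ∧
       w (inl 2) = w (inl 0) - w (inl 4) ∧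
       w (inl 3) = w (inl 4) + (∑ x ∈ N0 G, w (inr x)) - w (inl 0) ∧
       (fun x => w (inr x)) ∈ wcSpace F G) := by
  have m1 : IsMaxIndepF (HG G) (({0,1,5} : Finset (Fin 6)).image inl) :=
    (HG_maxIndep_iff G _).2 (Or.inl rfl)
  have m2 : IsMaxIndepF (HG G) (({2,3,4} : Finset (Fin 6)).image inl) :=
    (HG_maxIndep_iff G _).2 (Or.inr (Or.inl rfl))
  have m3 : IsMaxIndepF (HG G) (({0,3} : Finset (Fin 6)).image inl) :=
    (HG_maxIndep_iff G _).2 (Or.inr (Or.inr (Or.inl rfl)))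
  have m4 : IsMaxIndepF (HG G) (({1,2} : Finset (Fin 6)).image inl) :=
    (HG_maxIndep_iff G _).2 (Or.inr (Or.inr (Or.inr (Or.inl rfl))))
  have m5 : ∀ N : Finset V, IsMaxIndepF G N →
      IsMaxIndepF (HG G) (insert (inl 4) (N.image inr)) := fun N h =>
    (HG_maxIndep_iff G _).2 (Or.inr (Or.inr (Or.inr (Or.inr ⟨N, h, Or.inl rfl⟩))))
  have m6 : ∀ N : Finset V, IsMaxIndepF G N →
      IsMaxIndepF (HG G) (insert (inl 5) (N.image inr)) := fun N h =>
    (HG_maxIndep_iff G _).2 (Or.inr (Or.inr (Or.inr (Or.inr ⟨N, h, Or.inr rfl⟩))))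
  have s1 : ∑ z ∈ ({0,1,5} : Finset (Fin 6)).image inl, w z
      = w (inl 0) + w (inl 1) + w (inl 5) := by
    rw [sum_image_inl, Finset.sum_insert (by decide), Finset.sum_insert (by decide),
      Finset.sum_singleton]; ring
  have s2 : ∑ z ∈ ({2,3,4} : Finset (Fin 6)).image inl, w z
      = w (inl 2) + w (inl 3) + w (inl 4) := by
    rw [sum_image_inl, Finset.sum_insert (by decide), Finset.sum_insert (by decide),
      Finset.sum_singleton]; ring
  have s3 : ∑ z ∈ ({0,3} : Finset (Fin 6)).image inl, w z = w (inl 0) + w (inl 3) := by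
    rw [sum_image_inl, Finset.sum_insert (by decide), Finset.sum_singleton]
  have s4 : ∑ z ∈ ({1,2} : Finset (Fin 6)).image inl, w z = w (inl 1) + w (inl 2) := by
    rw [sum_image_inl, Finset.sum_insert (by decide), Finset.sum_singleton]
  constructor
  · intro hw
    have hw' : ∀ A B : Finset (Fin 6 ⊕ V), IsMaxIndepF (HG G) A → IsMaxIndepF (HG G) B →
        ∑ v ∈ A, w v = ∑ v ∈ B, w v := hw
    have e1 := hw' _ _ m1 (m5 _ (N0_spec G))
    have e2 := hw' _ _ m2 (m5 _ (N0_spec G))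
    have e3 := hw' _ _ m3 (m5 _ (N0_spec G))
    have e4 := hw' _ _ m4 (m5 _ (N0_spec G))
    have e5 := hw' _ _ (m6 _ (N0_spec G)) (m5 _ (N0_spec G))
    rw [s1, sum_insert_inr] at e1
    rw [s2, sum_insert_inr] at e2
    rw [s3, sum_insert_inr] at e3
    rw [s4, sum_insert_inr] at e4
    rw [sum_insert_inr, sum_insert_inr] at e5
    have h5 : w (inl 5) = w (inl 4) := by linear_combination e5
    have h2b : w (inl 4) + w (inl 4) = 0 := by linear_combination e1 + e2 - e3 - e4 - e5
    refine ⟨h5, h2b, by linear_combination e1 - e5, by linear_combination e4 - e1 + e5 + h2b,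
      by linear_combination e3, ?_⟩
    intro A B hA hB
    have := hw' _ _ (m5 _ hA) (m5 _ hB)
    rw [sum_insert_inr, sum_insert_inr] at this
    simp only []
    linear_combination this
  · rintro ⟨h5, h2b, h1, h2, h3, hf⟩
    have hf' : ∀ A B : Finset V, IsMaxIndepF G A → IsMaxIndepF G B →
        ∑ x ∈ A, w (inr x) = ∑ x ∈ B, w (inr x) := by
      intro A B hA hB
      have := hf A B hA hB
      simpa using this
    have key : ∀ M : Finset (Fin 6 ⊕ V), IsMaxIndepF (HG G) M →
        ∑ z ∈ M, w z = w (inl 4) + ∑ x ∈ N0 G, w (inr x) := by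
      intro M hM
      rcases (HG_maxIndep_iff G M).1 hM with rfl | rfl | rfl | rfl | ⟨N, hN, rfl | rfl⟩
      · rw [s1]; linear_combination h1 + h5
      · rw [s2]; linear_combination h2 + h3
      · rw [s3]; linear_combination h3
      · rw [s4]; linear_combination h1 + h2 - h2b
      · rw [sum_insert_inr]; linear_combination hf' N (N0 G) hN (N0_spec G)
      · rw [sum_insert_inr]; linear_combination h5 + hf' N (N0 G) hN (N0_spec G)
    intro A B hA hB
    rw [key A hA, key B hB]


noncomputable def theEquiv {F V : Type*} [Field F] [Fintype V] [Nonempty V] [DecidableEq V]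
    (G : SimpleGraph V) : wcSpace F (HG G) ≃ₗ[F] (wcSpace F G × F × K2sub F) where
  toFun w := (⟨fun x => w.1 (inr x), ((mem_wcSpace_HG_iff G w.1).1 w.2).2.2.2.2.2⟩,
    w.1 (inl 0), ⟨w.1 (inl 4), ((mem_wcSpace_HG_iff G w.1).1 w.2).2.1⟩)
  map_add' w w' := rfl
  map_smul' c w := rfl
  invFun p := ⟨Sum.elim
      ![p.2.1, (∑ x ∈ N0 G, (p.1 : V → F) x) - p.2.1, p.2.1 - (p.2.2 : F),
        (p.2.2 : F) + (∑ x ∈ N0 G, (p.1 : V → F) x) - p.2.1, (p.2.2 : F), (p.2.2 : F)]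
      (p.1 : V → F),
    (mem_wcSpace_HG_iff G _).2 ⟨rfl, p.2.2.2, rfl, rfl, rfl, p.1.2⟩⟩
  left_inv w := by
    obtain ⟨hw5, hw2b, hw1, hw2, hw3, hwf⟩ := (mem_wcSpace_HG_iff G w.1).1 w.2
    apply Subtype.ext
    funext z
    match z with
    | inr x => rfl
    | inl 0 => rfl
    | inl 1 => exact hw1.symm
    | inl 2 => exact hw2.symm
    | inl 3 => exact hw3.symm
    | inl 4 => rfl
    | inl 5 => exact hw5.symm
  right_inv p := rfl

/-- `wcdim(H_G, F) = wcdim(G, F) + 2` if `char F = 2`, and `wcdim(G, F) + 1` otherwise. -/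
theorem wcdim_HG {V : Type*} [Fintype V] [Nonempty V] (G : SimpleGraph V)
    (F : Type*) [Field F] :
    (ringChar F = 2 → wcdim F (HG G) = wcdim F G + 2) ∧
    (ringChar F ≠ 2 → wcdim F (HG G) = wcdim F G + 1) := by
  classical
  have e := theEquiv (F := F) G
  have h1 : wcdim F (HG G) = wcdim F G + (1 + Module.finrank F (K2sub F)) := by
    unfold wcdim
    rw [e.finrank_eq, Module.finrank_prod, Module.finrank_prod, Module.finrank_self]
  constructor
  · intro hchar
    have h2 : (K2sub F) = ⊤ := by
      rw [Submodule.eq_top_iff']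
      intro x
      show x + x = 0
      have h20 : (2:F) = 0 := by
        have := (ringChar.spec F 2).2 (by rw [hchar])
        exact_mod_cast this
      linear_combination x * h20
    rw [h1, h2, finrank_top, Module.finrank_self]
  · intro hchar
    have h2 : (K2sub F) = ⊥ := by
      rw [Submodule.eq_bot_iff]
      intro x hx
      have hx' : x + x = 0 := hx
      have h2ne : (2:F) ≠ 0 := Ring.two_ne_zero hchar
      have h0 : (2:F) * x = 0 := by linear_combination hx'
      rcases mul_eq_zero.1 h0 with h | h
      · exact absurd h h2ne
      · exact h
    rw [h1, h2, finrank_bot]
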